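/- arXiv:0801.2605 — 2 statements merged into one kernel-verified Lean document; each statement's English description precedes it below -/
import Mathlib

section
/- Let n ≥ 1. The function F(λ) = (1+nλ⁴)/(n+2−λ²), defined for 0 < λ² < n+2, satisfies F(λ) = λ² if and only if λ² = 1 or λ² = 1/(n+1); moreover F(λ) < λ² for 1/(n+1) < λ² < 1 and F(λ) > λ² for λ² > 1 (with λ² < n+2). -/
/-- The Ricci-map parameter function `F(λ) = (1+nλ⁴)/(n+2−λ²)` on `0 < λ² < n+2`
satisfies `F(λ) = λ²` iff `λ² = 1` or `λ² = 1/(n+1)`, with `F(λ) < λ²` for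
`1/(n+1) < λ² < 1` and `F(λ) > λ²` for `λ² > 1`. -/
theorem stmt9 (n : ℕ) (hn : 1 ≤ n) (lam : ℝ) (hlam : 0 < lam)
    (hlt : lam ^ 2 < (n : ℝ) + 2) :
    ((1 + (n : ℝ) * lam ^ 4) / ((n : ℝ) + 2 - lam ^ 2) = lam ^ 2 ↔
      lam ^ 2 = 1 ∨ lam ^ 2 = 1 / ((n : ℝ) + 1)) ∧
    (1 / ((n : ℝ) + 1) < lam ^ 2 → lam ^ 2 < 1 →
      (1 + (n : ℝ) * lam ^ 4) / ((n : ℝ) + 2 - lam ^ 2) < lam ^ 2) ∧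
    (1 < lam ^ 2 →
      lam ^ 2 < (1 + (n : ℝ) * lam ^ 4) / ((n : ℝ) + 2 - lam ^ 2)) := by
  have hn1 : (1 : ℝ) ≤ n := by exact_mod_cast hn
  have hd : (0 : ℝ) < (n : ℝ) + 2 - lam ^ 2 := by linarith
  have hn1' : (0 : ℝ) < (n : ℝ) + 1 := by linarith
  have key : 1 + (n : ℝ) * lam ^ 4 - lam ^ 2 * ((n : ℝ) + 2 - lam ^ 2)
      = (lam ^ 2 - 1) * (((n : ℝ) + 1) * lam ^ 2 - 1) := by ring
  refine ⟨?_, ?_, ?_⟩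
  · rw [div_eq_iff (ne_of_gt hd)]
    constructor
    · intro h
      have h2 : (lam ^ 2 - 1) * (((n : ℝ) + 1) * lam ^ 2 - 1) = 0 := by
        linarith [key]
      rcases mul_eq_zero.mp h2 with h3 | h3
      · left; linarith
      · right
        field_simp
        linarith
    · rintro (h | h)
      · have hz : (lam ^ 2 - 1) * (((n : ℝ) + 1) * lam ^ 2 - 1) = 0 := by rw [h]; ring
        linarith [key]
      · have h' : ((n : ℝ) + 1) * lam ^ 2 = 1 := by
          rw [h]; field_simp
        have hz : (lam ^ 2 - 1) * (((n : ℝ) + 1) * lam ^ 2 - 1) = 0 := by rw [h']; ring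
        linarith [key]
  · intro h1 h2
    rw [div_lt_iff₀ hd]
    have h1' : 1 < ((n : ℝ) + 1) * lam ^ 2 := by
      rw [div_lt_iff₀ hn1'] at h1; nlinarith
    have hz : (lam ^ 2 - 1) * (((n : ℝ) + 1) * lam ^ 2 - 1) < 0 :=
      mul_neg_of_neg_of_pos (by linarith) (by linarith)
    linarith [key]
  · intro h1
    rw [lt_div_iff₀ hd]
    have hb : 0 < ((n : ℝ) + 1) * lam ^ 2 - 1 := by nlinarith
    have hz : 0 < (lam ^ 2 - 1) * (((n : ℝ) + 1) * lam ^ 2 - 1) :=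
      mul_pos (by linarith) hb
    linarith [key]
end

section
/- For a cyclic permutation (μ,η,ν) of (1,2,3), suppose 1-forms α₁,α₂,α₃ and ℝⁿ-valued 1-forms X⁰,X¹,X²,X³ satisfy dα_μ − 2α_η∧α_ν = 2(ᵗX^μ∧X⁰ + ᵗX^η∧X^ν). Then the complex-valued 1-form ζ⁰ = α₁ + iα₃ satisfies dζ⁰ = −2iα₂∧ζ⁰ + ᵗZ²∧Z¹ − ᵗZ¹∧Z², where Z¹ = X⁰+iX² and Z² = X¹+iX³. -/
/-- Formula (2-13): if the 1-forms `α₁,α₂,α₃` and the `ℝⁿ`-valued 1-forms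
`X⁰,X¹,X²,X³` (all mutually anticommuting) satisfy
`dα_μ − 2α_η∧α_ν = 2(ᵗX^μ∧X⁰ + ᵗX^η∧X^ν)` for each cyclic permutation `(μ,η,ν)` of
`(1,2,3)`, then `ζ⁰ = α₁ + iα₃` satisfies
`dζ⁰ = −2iα₂∧ζ⁰ + ᵗZ²∧Z¹ − ᵗZ¹∧Z²` with `Z¹ = X⁰+iX²`, `Z² = X¹+iX³`. -/
theorem stmt19 (nn : ℕ) (Ω : Type*) [Ring Ω] [Algebra ℂ Ω]
    (d : Ω →ₗ[ℂ] Ω) (a1 a2 a3 : Ω) (X : Fin 4 → Fin nn → Ω)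
    (hanti : ∀ x ∈ ({a1, a2, a3} : Set Ω) ∪ {z | ∃ i b, z = X i b},
             ∀ y ∈ ({a1, a2, a3} : Set Ω) ∪ {z | ∃ i b, z = X i b},
             x * y = -(y * x))
    (h1 : d a1 - (2 : ℂ) • (a2 * a3) =
      (2 : ℂ) • (∑ b, (X 1 b * X 0 b + X 2 b * X 3 b)))
    (h2 : d a2 - (2 : ℂ) • (a3 * a1) =
      (2 : ℂ) • (∑ b, (X 2 b * X 0 b + X 3 b * X 1 b)))
    (h3 : d a3 - (2 : ℂ) • (a1 * a2) =
      (2 : ℂ) • (∑ b, (X 3 b * X 0 b + X 1 b * X 2 b))) :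
    d (a1 + Complex.I • a3) =
      (-(2 * Complex.I)) • (a2 * (a1 + Complex.I • a3)) +
        ∑ b, ((X 1 b + Complex.I • X 3 b) * (X 0 b + Complex.I • X 2 b) -
              (X 0 b + Complex.I • X 2 b) * (X 1 b + Complex.I • X 3 b)) := by
  have mem : ∀ i b, X i b ∈ ({a1, a2, a3} : Set Ω) ∪ {z | ∃ i b, z = X i b} :=
    fun i b => Or.inr ⟨i, b, rfl⟩
  have mem2 : a2 ∈ ({a1, a2, a3} : Set Ω) ∪ {z | ∃ i b, z = X i b} := Or.inl (by simp)
  have mem1 : a1 ∈ ({a1, a2, a3} : Set Ω) ∪ {z | ∃ i b, z = X i b} := Or.inl (by simp)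
  have hd1 : d a1 = (2 : ℂ) • (∑ b, (X 1 b * X 0 b + X 2 b * X 3 b)) + (2 : ℂ) • (a2 * a3) :=
    sub_eq_iff_eq_add.mp h1
  have hd3 : d a3 = (2 : ℂ) • (∑ b, (X 3 b * X 0 b + X 1 b * X 2 b)) + (2 : ℂ) • (a1 * a2) :=
    sub_eq_iff_eq_add.mp h3
  have key : ∀ b, (X 1 b + Complex.I • X 3 b) * (X 0 b + Complex.I • X 2 b) -
      (X 0 b + Complex.I • X 2 b) * (X 1 b + Complex.I • X 3 b) =
      (2 : ℂ) • (X 1 b * X 0 b + X 2 b * X 3 b) +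
        (2 * Complex.I) • (X 3 b * X 0 b + X 1 b * X 2 b) := by
    intro b
    have h01 : X 0 b * X 1 b = -(X 1 b * X 0 b) := hanti _ (mem 0 b) _ (mem 1 b)
    have h03 : X 0 b * X 3 b = -(X 3 b * X 0 b) := hanti _ (mem 0 b) _ (mem 3 b)
    have h21 : X 2 b * X 1 b = -(X 1 b * X 2 b) := hanti _ (mem 2 b) _ (mem 1 b)
    have h23 : X 2 b * X 3 b = -(X 3 b * X 2 b) := hanti _ (mem 2 b) _ (mem 3 b)
    have h32 : X 3 b * X 2 b = -(X 2 b * X 3 b) := hanti _ (mem 3 b) _ (mem 2 b)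
    simp only [mul_add, add_mul, smul_mul_assoc, mul_smul_comm, smul_smul,
      Complex.I_mul_I, neg_one_smul, h01, h03, h21, h32]
    match_scalars <;> (ring_nf; try simp [Complex.I_sq])
  have h21a : a2 * a1 = -(a1 * a2) := hanti _ mem2 _ mem1
  rw [map_add, map_smul, hd1, hd3]
  simp only [key]
  simp only [mul_add, mul_smul_comm, h21a, Finset.sum_add_distrib, ← Finset.smul_sum]
  match_scalars <;> (ring_nf; try simp [Complex.I_sq])
end
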